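/- Suppose f : ℝ^d → ℝ is twice continuously differentiable and L-smooth. Fix μ ∈ ℝ^d, α > 0, and a symmetric positive definite d×d matrix Σ with τ·I ⪯ Σ^{-1} ⪯ ζ·I where 0 < τ ≤ ζ. If u ∈ ℝ^d satisfies ‖u‖² ≤ c for some c > 0, then ‖(f(μ − αΣ^{1/2}u) + f(μ + αΣ^{1/2}u) − 2f(μ))·(Σ^{-1/2}uuᵀΣ^{-1/2} − Σ^{-1})‖_F ≤ 2Lτ^{-1}α²·c·(ζc + √d·ζ). -/

import Mathlib

open MeasureTheory ProbabilityTheory Matrix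
open scoped BigOperators RealInnerProductSpace

noncomputable section

abbrev Vec (d : ℕ) := EuclideanSpace ℝ (Fin d)
abbrev Mat (d : ℕ) := Matrix (Fin d) (Fin d) ℝ

/-- View a Euclidean vector as a plain function. -/
def toPi {d : ℕ} (u : Vec d) : Fin d → ℝ := WithLp.ofLp u
/-- View a plain function as a Euclidean vector. -/
def ofPi {d : ℕ} (u : Fin d → ℝ) : Vec d := WithLp.toLp 2 u

open scoped ComplexOrder in
/-- The positive semidefinite square root of a positive semidefinite matrix
(the definition `Matrix.PosSemidef.sqrt` of the older Mathlib, removed since). -/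
noncomputable def Matrix.PosSemidef.sqrt {n 𝕜 : Type*} [Fintype n] [DecidableEq n] [RCLike 𝕜]
    {A : Matrix n n 𝕜} (hA : A.PosSemidef) : Matrix n n 𝕜 :=
  hA.1.eigenvectorUnitary.1 * Matrix.diagonal ((↑) ∘ (Real.sqrt ∘ hA.1.eigenvalues)) *
    (star hA.1.eigenvectorUnitary : Matrix n n 𝕜)

/-- Matrix-vector multiplication on Euclidean space. -/
def mvec {d : ℕ} (A : Mat d) (u : Vec d) : Vec d := ofPi (A.mulVec (toPi u))

/-- The standard Gaussian measure N(0, I_d) on ℝ^d. -/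
def gaussD (d : ℕ) : Measure (Vec d) :=
  (Measure.pi fun _ : Fin d => gaussianReal 0 1).map (MeasurableEquiv.toLp 2 (Fin d → ℝ))

/-- Frobenius norm of a matrix. -/
def matFrobNorm {m n : ℕ} (A : Matrix (Fin m) (Fin n) ℝ) : ℝ :=
  Real.sqrt (∑ i, ∑ j, (A i j) ^ 2)

/-- Operator (spectral) norm of a matrix. -/
def matOpNorm {m n : ℕ} (A : Matrix (Fin m) (Fin n) ℝ) : ℝ :=
  ‖LinearMap.toContinuousLinearMap (Matrix.toEuclideanLin A)‖

/-- Loewner order `A ⪯ B`. -/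
def loeLE {d : ℕ} (A B : Mat d) : Prop := (B - A).PosSemidef

/-- Hessian matrix of `f` at `x`. -/
def hess {d : ℕ} (f : Vec d → ℝ) (x : Vec d) : Mat d :=
  Matrix.of fun i j =>
    iteratedFDeriv ℝ 2 f x ![EuclideanSpace.single i 1, EuclideanSpace.single j 1]

/-- Membership in `S = {Σ symmetric : ζ⁻¹ I ⪯ Σ ⪯ τ⁻¹ I}`. -/
def Smem {d : ℕ} (τ ζ : ℝ) (A : Mat d) : Prop :=
  A.IsSymm ∧ loeLE (ζ⁻¹ • 1) A ∧ loeLE A (τ⁻¹ • 1)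

/-- Membership in `S' = {A symmetric : τ I ⪯ A ⪯ ζ I}`. -/
def S'mem {d : ℕ} (τ ζ : ℝ) (A : Mat d) : Prop :=
  A.IsSymm ∧ loeLE (τ • 1) A ∧ loeLE A (ζ • 1)

/-- The regularized reparameterized objective `Q_α(μ, Σ)`. -/
def Qa {d : ℕ} (f : Vec d → ℝ) (α : ℝ) (μ : Vec d) (S : Mat d) (hS : S.PosSemidef) : ℝ :=
  (∫ u, f (μ + α • mvec hS.sqrt u) ∂ gaussD d) - α ^ 2 / 2 * Real.log S.det

lemma Matrix.PosSemidef.sqrt_mul_self {d : ℕ} {A : Mat d} (hA : A.PosSemidef) :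
    hA.sqrt * hA.sqrt = A := by
  have hU : star (hA.1.eigenvectorUnitary : Mat d) * (hA.1.eigenvectorUnitary : Mat d) = 1 :=
    hA.1.eigenvectorUnitary.2.1
  unfold Matrix.PosSemidef.sqrt
  have e : ∀ U D V : Mat d, U * D * V * (U * D * V) = U * D * (V * U) * D * V := by
    intro U D V; simp only [Matrix.mul_assoc]
  rw [e, hU, Matrix.mul_one, Matrix.mul_assoc _ (diagonal _) (diagonal _), Matrix.diagonal_mul_diagonal]
  conv_rhs => rw [hA.1.spectral_theorem, Unitary.conjStarAlgAut_apply]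
  congr 3
  funext k
  simp [Real.mul_self_sqrt (hA.eigenvalues_nonneg k)]

lemma Matrix.PosSemidef.posSemidef_sqrt {d : ℕ} {A : Mat d} (hA : A.PosSemidef) :
    hA.sqrt.PosSemidef := by
  unfold Matrix.PosSemidef.sqrt
  rw [Matrix.star_eq_conjTranspose]
  exact (Matrix.posSemidef_diagonal_iff.mpr (fun k => by simp [Real.sqrt_nonneg])).mul_mul_conjTranspose_same _

section Aux
variable {d : ℕ}

lemma psd_quad {A : Mat d} (hA : A.PosSemidef) (x : Fin d → ℝ) : 0 ≤ x ⬝ᵥ A.mulVec x := by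
  simpa using hA.dotProduct_mulVec_nonneg x

lemma dot_mulVec_mulVec (A B : Mat d) (x y : Fin d → ℝ) :
    (A *ᵥ x) ⬝ᵥ (B *ᵥ y) = x ⬝ᵥ ((Aᵀ * B) *ᵥ y) := by
  rw [Matrix.dotProduct_mulVec, Matrix.vecMul_mulVec, ← Matrix.dotProduct_mulVec]

lemma quad_smul_one (τ : ℝ) (x : Fin d → ℝ) :
    x ⬝ᵥ ((τ • (1 : Mat d)) *ᵥ x) = τ * (x ⬝ᵥ x) := by
  simp [Matrix.smul_mulVec, Matrix.one_mulVec, dotProduct_smul, smul_eq_mul]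

lemma norm_sq_eq_dot (v : Vec d) : ‖v‖ ^ 2 = (toPi v) ⬝ᵥ (toPi v) := by
  rw [EuclideanSpace.norm_eq, Real.sq_sqrt (by positivity)]
  simp [dotProduct, toPi, Real.norm_eq_abs, sq_abs, pow_two]

lemma mvt_line (f : Vec d → ℝ) (hf : ContDiff ℝ 2 f) (x h : Vec d) :
    ∃ t ∈ Set.Ioo (0:ℝ) 1, (fderiv ℝ f (x + t • h)) h = f (x + h) - f x := by
  have hdf : Differentiable ℝ f := hf.differentiable (by norm_num)
  have key : ∀ t : ℝ, HasDerivAt (fun s : ℝ => f (x + s • h)) ((fderiv ℝ f (x + t • h)) h) t := by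
    intro t
    have h1 : HasDerivAt (fun s : ℝ => x + s • h) h t := by
      simpa using ((hasDerivAt_id t).smul_const h).const_add x
    exact ((hdf (x + t • h)).hasFDerivAt).comp_hasDerivAt t h1
  obtain ⟨t, ht, h2⟩ := exists_hasDerivAt_eq_slope (fun s : ℝ => f (x + s • h))
    (fun t => (fderiv ℝ f (x + t • h)) h) one_pos
    (fun s _ => (key s).continuousAt.continuousWithinAt)
    (fun s _ => key s)
  refine ⟨t, ht, ?_⟩
  rw [h2]; simp

lemma second_diff (f : Vec d → ℝ) (L : ℝ) (hL0 : 0 < L) (hf : ContDiff ℝ 2 f)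
    (hL : ∀ x y : Vec d, ‖gradient f x - gradient f y‖ ≤ L * ‖x - y‖)
    (x h : Vec d) : |f (x + h) + f (x - h) - 2 * f x| ≤ 2 * L * ‖h‖ ^ 2 := by
  have hL' : ∀ a b : Vec d, ‖fderiv ℝ f a - fderiv ℝ f b‖ ≤ L * ‖a - b‖ := by
    intro a b
    have h0 := hL a b
    rwa [gradient, gradient, ← LinearIsometryEquiv.map_sub, LinearIsometryEquiv.norm_map] at h0
  obtain ⟨t₁, ht₁, e₁⟩ := mvt_line f hf x h
  obtain ⟨t₂, ht₂, e₂⟩ := mvt_line f hf x (-h)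
  rw [← sub_eq_add_neg] at e₂
  set p₁ := x + t₁ • h
  set p₂ := x + t₂ • (-h)
  have key : f (x + h) + f (x - h) - 2 * f x
      = (fderiv ℝ f p₁ - fderiv ℝ f p₂) h := by
    have : (fderiv ℝ f p₂) h = -(f (x - h) - f x) := by
      have := e₂
      have hneg : (fderiv ℝ f p₂) (-h) = -((fderiv ℝ f p₂) h) := by
        simp
      rw [hneg] at this
      linarith
    rw [ContinuousLinearMap.sub_apply, e₁, this]
    ring
  rw [key]
  calc |(fderiv ℝ f p₁ - fderiv ℝ f p₂) h|
      ≤ ‖fderiv ℝ f p₁ - fderiv ℝ f p₂‖ * ‖h‖ := by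
        simpa [Real.norm_eq_abs] using (fderiv ℝ f p₁ - fderiv ℝ f p₂).le_opNorm h
    _ ≤ (L * ‖p₁ - p₂‖) * ‖h‖ := by
        exact mul_le_mul_of_nonneg_right (hL' p₁ p₂) (norm_nonneg _)
    _ ≤ 2 * L * ‖h‖ ^ 2 := by
        have hp : p₁ - p₂ = (t₁ + t₂) • h := by
          simp only [p₁, p₂, smul_neg]
          rw [add_smul]
          abel
        have hnp : ‖p₁ - p₂‖ ≤ 2 * ‖h‖ := by
          rw [hp, norm_smul, Real.norm_eq_abs]
          have : |t₁ + t₂| ≤ 2 := by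
            rw [abs_le]; constructor <;> [linarith [ht₁.1, ht₂.1]; linarith [ht₁.2, ht₂.2]]
          exact mul_le_mul_of_nonneg_right this (norm_nonneg _)
        calc L * ‖p₁ - p₂‖ * ‖h‖ ≤ L * (2 * ‖h‖) * ‖h‖ := by
              exact mul_le_mul_of_nonneg_right
                (mul_le_mul_of_nonneg_left hnp hL0.le) (norm_nonneg _)
          _ = 2 * L * ‖h‖ ^ 2 := by ring

end Aux

section Aux2
variable {d : ℕ}

lemma frob_smul (s : ℝ) (g : Fin d → Fin d → ℝ) :
    matFrobNorm (Matrix.of fun i j => s * g i j) = |s| * matFrobNorm (Matrix.of g) := by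
  unfold matFrobNorm
  rw [← Real.sqrt_sq_eq_abs, ← Real.sqrt_mul (sq_nonneg s)]
  congr 1
  simp [Finset.mul_sum, of_apply, mul_pow]

lemma frob_sub_le (y z : Fin d → Fin d → ℝ) :
    matFrobNorm (Matrix.of fun i j => y i j - z i j)
      ≤ matFrobNorm (Matrix.of y) + matFrobNorm (Matrix.of z) := by
  classical
  let e (g : Fin d → Fin d → ℝ) : EuclideanSpace ℝ (Fin d × Fin d) :=
    (WithLp.equiv 2 (Fin d × Fin d → ℝ)).symm (fun p => g p.1 p.2)
  have key : ∀ g : Fin d → Fin d → ℝ, matFrobNorm (Matrix.of g) = ‖e g‖ := by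
    intro g
    rw [EuclideanSpace.norm_eq, matFrobNorm]
    congr 1
    rw [Fintype.sum_prod_type]
    simp [e, sq_abs]
  have hsub : e (fun i j => y i j - z i j) = e y - e z := rfl
  rw [key, key, key, hsub]
  exact norm_sub_le _ _

lemma frob_outer (w : Fin d → ℝ) :
    matFrobNorm (Matrix.of fun i j => w i * w j) = w ⬝ᵥ w := by
  unfold matFrobNorm
  have h1 : (∑ i, ∑ j, ((Matrix.of fun i j => w i * w j) i j) ^ 2) = (w ⬝ᵥ w) ^ 2 := by
    simp only [of_apply, mul_pow, dotProduct, sq]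
    rw [Finset.sum_mul_sum]
    apply Finset.sum_congr rfl; intro i _
    apply Finset.sum_congr rfl; intro j _
    ring
  have hnn : 0 ≤ w ⬝ᵥ w := Finset.sum_nonneg fun i _ => mul_self_nonneg _
  rw [h1, Real.sqrt_sq hnn]
end Aux2

section Aux3
variable {d : ℕ}

lemma quad_single {A : Mat d} (i : Fin d) :
    (Pi.single i 1 : Fin d → ℝ) ⬝ᵥ (A *ᵥ (Pi.single i 1)) = A i i := by
  simp [dotProduct, mulVec, Pi.single_apply]

-- diagonal entry bound: A ⪯ ζ I and A PSD symmetric ⟹ ∑ j (A i j)^2 ≤ ζ^2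
lemma row_sq_sum_le {A : Mat d} (hA : A.PosSemidef) (ζ : ℝ) (hζ : 0 ≤ ζ)
    (hAζ : loeLE A (ζ • 1)) (i : Fin d) : ∑ j, (A i j) ^ 2 ≤ ζ ^ 2 := by
  obtain ⟨Q, hQ, hQQ⟩ : ∃ Q : Mat d, Q.PosSemidef ∧ Q * Q = A :=
    ⟨hA.sqrt, hA.posSemidef_sqrt, hA.sqrt_mul_self⟩
  have hmid : (ζ • (1 : Mat d) - A).PosSemidef := hAζ
  have hconj : (Q * (ζ • (1 : Mat d) - A) * Qᴴ).PosSemidef :=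
    hmid.mul_mul_conjTranspose_same Q
  have hQH : Qᴴ = Q := hQ.1
  have hexp : Q * (ζ • (1 : Mat d) - A) * Qᴴ = ζ • A - A * A := by
    rw [hQH, mul_sub, sub_mul, mul_smul_comm, mul_one, smul_mul_assoc, hQQ]
    congr 1
    rw [← hQQ]
    rw [show Q * (Q * Q) * Q = (Q * Q) * (Q * Q) by noncomm_ring]
  rw [hexp] at hconj
  -- quadratic at e_i
  have h1 : (A * A) i i ≤ ζ * A i i := by
    have h0 := psd_quad hconj (Pi.single i 1)
    rw [Matrix.sub_mulVec, dotProduct_sub, quad_single, quad_single] at h0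
    have h2 : (ζ • A) i i = ζ * A i i := rfl
    linarith [h2 ▸ h0]
  have hAii : A i i ≤ ζ := by
    have h0 := psd_quad hmid (Pi.single i 1)
    rw [Matrix.sub_mulVec, dotProduct_sub, quad_single, quad_single] at h0
    have h2 : ((ζ • (1 : Mat d)) i i : ℝ) = ζ := by
      simp [Matrix.smul_apply, Matrix.one_apply_eq]
    linarith [h2 ▸ h0]
  have hdiag : (A * A) i i = ∑ j, (A i j) ^ 2 := by
    simp only [Matrix.mul_apply, sq]
    apply Finset.sum_congr rfl; intro j _
    have : A j i = A i j := by
      have := hA.1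
      calc A j i = Aᴴ i j := by simp [Matrix.conjTranspose_apply]
        _ = A i j := by rw [this]
    rw [this]
  calc ∑ j, (A i j) ^ 2 = (A * A) i i := hdiag.symm
    _ ≤ ζ * A i i := h1
    _ ≤ ζ * ζ := mul_le_mul_of_nonneg_left hAii hζ
    _ = ζ ^ 2 := (sq ζ).symm

lemma frob_le_of_loe {A : Mat d} (hA : A.PosSemidef) (ζ : ℝ) (hζ : 0 ≤ ζ)
    (hAζ : loeLE A (ζ • 1)) : matFrobNorm A ≤ Real.sqrt d * ζ := by
  unfold matFrobNorm
  have h1 : (∑ i, ∑ j, (A i j) ^ 2) ≤ d * ζ ^ 2 := by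
    calc (∑ i, ∑ j, (A i j) ^ 2) ≤ ∑ _i : Fin d, ζ ^ 2 :=
          Finset.sum_le_sum fun i _ => row_sq_sum_le hA ζ hζ hAζ i
      _ = d * ζ ^ 2 := by simp [mul_comm]
  calc Real.sqrt (∑ i, ∑ j, (A i j) ^ 2) ≤ Real.sqrt (d * ζ ^ 2) := Real.sqrt_le_sqrt h1
    _ = Real.sqrt d * ζ := by
        rw [Real.sqrt_mul (Nat.cast_nonneg d), Real.sqrt_sq hζ]

end Aux3

section MainAux
variable {d : ℕ}

lemma main_aux (f : Vec d → ℝ) (L : ℝ) (hL0 : 0 < L) (hf : ContDiff ℝ 2 f)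
    (hL : ∀ x y : Vec d, ‖gradient f x - gradient f y‖ ≤ L * ‖x - y‖)
    (μ : Vec d) (α : ℝ) (τ ζ : ℝ) (hτ : 0 < τ) (hτζ : τ ≤ ζ)
    (S : Mat d) (hS : S.PosDef) (R : Mat d) (hR : R.PosSemidef) (hRR : R * R = S)
    (hτS : loeLE (τ • 1) S⁻¹) (hSζ : loeLE S⁻¹ (ζ • 1))
    (u : Vec d) (c : ℝ) (hc : 0 < c) (hu : ‖u‖ ^ 2 ≤ c) :
    matFrobNorm (Matrix.of fun i j =>
        (f (μ - α • mvec R u) + f (μ + α • mvec R u) - 2 * f μ) *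
          ((R⁻¹.mulVec (toPi u)) i * (R⁻¹.mulVec (toPi u)) j - S⁻¹ i j))
      ≤ 2 * L * τ⁻¹ * α ^ 2 * c * (ζ * c + Real.sqrt d * ζ) := by
  have hζ : 0 ≤ ζ := hτ.le.trans hτζ
  have hdetR : IsUnit R.det := by
    have h1 : R.det * R.det = S.det := by rw [← Matrix.det_mul, hRR]
    have h2 : R.det ≠ 0 := by
      intro h0
      rw [h0, mul_zero] at h1
      exact hS.det_pos.ne' h1.symm
    exact isUnit_iff_ne_zero.mpr h2
  have hRT : Rᵀ = R := by
    have h : Rᴴ = R := hR.1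
    ext i j
    have h2 := congrFun (congrFun h i) j
    simpa [Matrix.conjTranspose_apply] using h2
  have hRinv : R * R⁻¹ = 1 := Matrix.mul_nonsing_inv R hdetR
  have hinvR : R⁻¹ * R = 1 := Matrix.nonsing_inv_mul R hdetR
  have hSinv : S⁻¹ = R⁻¹ * R⁻¹ := by rw [← hRR, Matrix.mul_inv_rev]
  set x : Fin d → ℝ := toPi u with hxdef
  have hx : x ⬝ᵥ x ≤ c := by rw [← norm_sq_eq_dot]; exact hu
  -- bound on ‖R u‖²
  set w : Fin d → ℝ := R *ᵥ x with hwdef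
  have hww : w ⬝ᵥ w ≤ τ⁻¹ * c := by
    have h0 := psd_quad hτS w
    rw [Matrix.sub_mulVec, dotProduct_sub, quad_smul_one] at h0
    have h1 : w ⬝ᵥ (S⁻¹ *ᵥ w) = x ⬝ᵥ x := by
      rw [hwdef, Matrix.mulVec_mulVec, dot_mulVec_mulVec]
      have : Rᵀ * (S⁻¹ * R) = 1 := by
        rw [hSinv, hRT, ← Matrix.mul_assoc, ← Matrix.mul_assoc, hRinv,
          Matrix.one_mul, hinvR]
      rw [this, Matrix.one_mulVec]
    rw [h1] at h0
    have h2 : τ * (w ⬝ᵥ w) ≤ c := le_trans (by linarith) hx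
    have h3 : w ⬝ᵥ w ≤ c / τ := (le_div_iff₀' hτ).mpr h2
    rwa [div_eq_inv_mul] at h3
  -- scalar bound
  set h : Vec d := α • mvec R u with hhdef
  have hnh : ‖h‖ ^ 2 ≤ α ^ 2 * (τ⁻¹ * c) := by
    have h1 : ‖h‖ ^ 2 = α ^ 2 * ‖mvec R u‖ ^ 2 := by
      rw [hhdef, norm_smul, mul_pow, Real.norm_eq_abs, sq_abs]
    have h2 : ‖mvec R u‖ ^ 2 = w ⬝ᵥ w := by rw [norm_sq_eq_dot (mvec R u)]; rfl
    rw [h1, h2]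
    exact mul_le_mul_of_nonneg_left hww (sq_nonneg α)
  set s : ℝ := f (μ - α • mvec R u) + f (μ + α • mvec R u) - 2 * f μ with hsdef
  have hs : |s| ≤ 2 * L * (α ^ 2 * (τ⁻¹ * c)) := by
    have h1 := second_diff f L hL0 hf hL μ h
    have h2 : s = f (μ + h) + f (μ - h) - 2 * f μ := by rw [hhdef]; ring
    calc |s| ≤ 2 * L * ‖h‖ ^ 2 := by rw [h2]; exact h1
      _ ≤ 2 * L * (α ^ 2 * (τ⁻¹ * c)) :=
          mul_le_mul_of_nonneg_left hnh (by linarith)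
  -- matrix factor bound
  set wB : Fin d → ℝ := R⁻¹ *ᵥ x with hwBdef
  have hBB : wB ⬝ᵥ wB = x ⬝ᵥ (S⁻¹ *ᵥ x) := by
    rw [hwBdef, dot_mulVec_mulVec]
    have : (R⁻¹)ᵀ = R⁻¹ := by rw [Matrix.transpose_nonsing_inv, hRT]
    rw [this, ← hSinv]
  have houter : wB ⬝ᵥ wB ≤ ζ * c := by
    have h0 := psd_quad hSζ x
    rw [Matrix.sub_mulVec, dotProduct_sub, quad_smul_one] at h0
    rw [hBB]
    calc x ⬝ᵥ (S⁻¹ *ᵥ x) ≤ ζ * (x ⬝ᵥ x) := by linarith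
      _ ≤ ζ * c := mul_le_mul_of_nonneg_left hx hζ
  have hfrobInv : matFrobNorm (S⁻¹) ≤ Real.sqrt d * ζ :=
    frob_le_of_loe hS.inv.posSemidef ζ hζ hSζ
  have hfrobM : matFrobNorm (Matrix.of fun i j => wB i * wB j - S⁻¹ i j)
      ≤ ζ * c + Real.sqrt d * ζ := by
    calc matFrobNorm (Matrix.of fun i j => wB i * wB j - S⁻¹ i j)
        ≤ matFrobNorm (Matrix.of fun i j => wB i * wB j)
            + matFrobNorm (Matrix.of fun i j => S⁻¹ i j) :=
          frob_sub_le _ _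
      _ ≤ ζ * c + Real.sqrt d * ζ := by
          have e1 : matFrobNorm (Matrix.of fun i j => wB i * wB j) = wB ⬝ᵥ wB :=
            frob_outer wB
          have e2 : (Matrix.of fun i j => S⁻¹ i j) = S⁻¹ := rfl
          rw [e1, e2]
          exact add_le_add houter hfrobInv
  -- combine
  have hgoal : matFrobNorm (Matrix.of fun i j =>
      s * (wB i * wB j - S⁻¹ i j))
      = |s| * matFrobNorm (Matrix.of fun i j => wB i * wB j - S⁻¹ i j) :=
    frob_smul s _
  calc matFrobNorm (Matrix.of fun i j =>
        (f (μ - α • mvec R u) + f (μ + α • mvec R u) - 2 * f μ) *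
          ((R⁻¹.mulVec (toPi u)) i * (R⁻¹.mulVec (toPi u)) j - S⁻¹ i j))
      = |s| * matFrobNorm (Matrix.of fun i j => wB i * wB j - S⁻¹ i j) := hgoal
    _ ≤ (2 * L * (α ^ 2 * (τ⁻¹ * c))) * (ζ * c + Real.sqrt d * ζ) := by
        apply mul_le_mul hs hfrobM (Real.sqrt_nonneg _)
        positivity
    _ = 2 * L * τ⁻¹ * α ^ 2 * c * (ζ * c + Real.sqrt d * ζ) := by ring

end MainAux

/-- Frobenius-norm bound on a single term of the covariance-gradient
estimator, given `‖u‖² ≤ c`. -/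
theorem stmt12 {d : ℕ} (hd : 1 ≤ d)
    (f : Vec d → ℝ) (L : ℝ) (hL0 : 0 < L) (hf : ContDiff ℝ 2 f)
    (hL : ∀ x y : Vec d, ‖gradient f x - gradient f y‖ ≤ L * ‖x - y‖)
    (μ : Vec d) (α : ℝ) (hα : 0 < α) (τ ζ : ℝ) (hτ : 0 < τ) (hτζ : τ ≤ ζ)
    (S : Mat d) (hSsymm : S.IsSymm) (hS : S.PosDef)
    (hτS : loeLE (τ • 1) S⁻¹) (hSζ : loeLE S⁻¹ (ζ • 1))
    (u : Vec d) (c : ℝ) (hc : 0 < c) (hu : ‖u‖ ^ 2 ≤ c) :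
    matFrobNorm (Matrix.of fun i j =>
        (f (μ - α • mvec hS.posSemidef.sqrt u) + f (μ + α • mvec hS.posSemidef.sqrt u)
            - 2 * f μ) *
          (((hS.posSemidef.sqrt)⁻¹.mulVec (toPi u)) i *
             ((hS.posSemidef.sqrt)⁻¹.mulVec (toPi u)) j - S⁻¹ i j))
      ≤ 2 * L * τ⁻¹ * α ^ 2 * c * (ζ * c + Real.sqrt d * ζ) := by
  exact main_aux f L hL0 hf hL μ α τ ζ hτ hτζ S hS hS.posSemidef.sqrt
    hS.posSemidef.posSemidef_sqrt hS.posSemidef.sqrt_mul_self hτS hSζ u c hc hu
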